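/- Let Δ : (0,1) × (0,1) → [0,∞) be such that for every ε ∈ (0,1), Δ(δ,ε) → 0 as δ → 0⁺, and let ρ : (0,1) → (0,∞) satisfy ρ(t) → 0 as t → 0⁺. Then there exists a function ε : (0,1) → (0,1) with δ < ε(δ) for small δ and such that, as δ → 0⁺: ε(δ) → 0, δ/ε(δ) → 0, ε(δ)^{ρ(δ/ε(δ))} → 1, and Δ(δ, ε(δ)) → 0. -/

import Mathlib

open Filter Set

/-- Choice of a slowly decaying `ε(δ)`: if `Δ(δ,ε) → 0` as `δ → 0⁺` for each fixed
`ε ∈ (0,1)`, and `ρ(t) → 0` as `t → 0⁺`, then there is `ε : (0,1) → (0,1)` with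
`δ < ε(δ)` for small `δ`, `ε(δ) → 0`, `δ/ε(δ) → 0`, `ε(δ)^{ρ(δ/ε(δ))} → 1`, and
`Δ(δ, ε(δ)) → 0` as `δ → 0⁺`. -/
theorem stmt17 (Δ : ℝ → ℝ → ℝ)
    (hΔnn : ∀ δ ∈ Ioo (0 : ℝ) 1, ∀ ε ∈ Ioo (0 : ℝ) 1, 0 ≤ Δ δ ε)
    (hΔ : ∀ ε ∈ Ioo (0 : ℝ) 1,
      Tendsto (fun δ => Δ δ ε) (nhdsWithin 0 (Ioi 0)) (nhds 0))
    (ρ : ℝ → ℝ) (hρpos : ∀ t ∈ Ioo (0 : ℝ) 1, 0 < ρ t)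
    (hρ : Tendsto ρ (nhdsWithin 0 (Ioi 0)) (nhds 0)) :
    ∃ ε : ℝ → ℝ,
      (∀ δ ∈ Ioo (0 : ℝ) 1, ε δ ∈ Ioo (0 : ℝ) 1) ∧
      (∀ᶠ δ in nhdsWithin 0 (Ioi 0), δ < ε δ) ∧
      Tendsto ε (nhdsWithin 0 (Ioi 0)) (nhds 0) ∧
      Tendsto (fun δ => δ / ε δ) (nhdsWithin 0 (Ioi 0)) (nhds 0) ∧
      Tendsto (fun δ => ε δ ^ ρ (δ / ε δ)) (nhdsWithin 0 (Ioi 0)) (nhds 1) ∧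
      Tendsto (fun δ => Δ δ (ε δ)) (nhdsWithin 0 (Ioi 0)) (nhds 0) := by
  classical
  -- Step 1: for each `n`, a threshold `a` good for `ε = 1/(n+2)`.
  have hAex : ∀ n : ℕ, ∃ a : ℝ, 0 < a ∧ a < 1 / ((n : ℝ) + 2) ^ 2 ∧
      ∀ δ : ℝ, 0 < δ → δ < a →
        |Δ δ (1 / ((n : ℝ) + 2))| < 1 / ((n : ℝ) + 2) ∧
        |ρ (δ * ((n : ℝ) + 2))| < 1 / ((n : ℝ) + 2) ^ 2 := by
    intro n
    set x : ℝ := (n : ℝ) + 2 with hxdef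
    have hx2 : (2:ℝ) ≤ x := by
      have : (0:ℝ) ≤ (n:ℝ) := Nat.cast_nonneg n
      rw [hxdef]; linarith
    have hx0 : (0:ℝ) < x := by linarith
    have hmem : 1 / x ∈ Ioo (0:ℝ) 1 := ⟨by positivity, by rw [div_lt_one hx0]; linarith⟩
    have h1 : ∀ᶠ δ in nhdsWithin (0:ℝ) (Ioi 0), |Δ δ (1/x)| < 1/x := by
      have := Metric.tendsto_nhds.mp (hΔ _ hmem) (1/x) (by positivity)
      simpa [Real.dist_eq] using this
    have h2 : ∀ᶠ t in nhdsWithin (0:ℝ) (Ioi 0), |ρ t| < 1/x^2 := by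
      have := Metric.tendsto_nhds.mp hρ (1/x^2) (by positivity)
      simpa [Real.dist_eq] using this
    obtain ⟨u1, hu1, hs1⟩ := mem_nhdsGT_iff_exists_Ioo_subset.mp h1
    obtain ⟨u2, hu2, hs2⟩ := mem_nhdsGT_iff_exists_Ioo_subset.mp h2
    have hu1' : (0:ℝ) < u1 := hu1
    have hu2' : (0:ℝ) < u2 := hu2
    refine ⟨min (min u1 (u2 / x)) (1/(2*x^2)), ?_, ?_, ?_⟩
    · have h3 : (0:ℝ) < u2 / x := by positivity
      have h4 : (0:ℝ) < 1/(2*x^2) := by positivity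
      exact lt_min (lt_min hu1' h3) h4
    · calc min (min u1 (u2 / x)) (1/(2*x^2)) ≤ 1/(2*x^2) := min_le_right _ _
        _ < 1/x^2 := by
          rw [div_lt_div_iff₀ (by positivity) (by positivity)]
          nlinarith
    · intro δ hδ0 hδa
      have hδu1 : δ < u1 := lt_of_lt_of_le hδa (le_trans (min_le_left _ _) (min_le_left _ _))
      have hδu2 : δ < u2 / x := lt_of_lt_of_le hδa (le_trans (min_le_left _ _) (min_le_right _ _))
      constructor
      · exact hs1 ⟨hδ0, hδu1⟩
      · refine hs2 ⟨by positivity, ?_⟩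
        calc δ * x < (u2 / x) * x := by
              exact mul_lt_mul_of_pos_right hδu2 hx0
          _ = u2 := div_mul_cancel₀ _ (ne_of_gt hx0)
  choose A hA0 hA1 hA2 using hAex
  -- Step 2: decreasing thresholds `c`.
  set c : ℕ → ℝ := fun n => Nat.rec (A 0) (fun n cn => min (cn / 2) (A (n + 1))) n with hc
  have hc0 : c 0 = A 0 := rfl
  have hcs : ∀ n, c (n + 1) = min (c n / 2) (A (n + 1)) := fun n => rfl
  have hcpos : ∀ n, 0 < c n := by
    intro n
    induction n with
    | zero => exact hA0 0
    | succ n ih => rw [hcs]; exact lt_min (by linarith) (hA0 _)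
  have hcA : ∀ n, c n ≤ A n := by
    intro n
    cases n with
    | zero => exact le_of_eq hc0
    | succ n => rw [hcs]; exact min_le_right _ _
  have hchalf : ∀ n, c (n + 1) ≤ c n / 2 := fun n => by rw [hcs]; exact min_le_left _ _
  have hcanti : ∀ m n, m ≤ n → c n ≤ c m := by
    have : ∀ n, c (n+1) ≤ c n := fun n => le_trans (hchalf n) (by linarith [hcpos n])
    intro m n h
    exact antitone_nat_of_succ_le this h
  have hcbound : ∀ n, c n ≤ c 0 / 2 ^ n := by
    intro n
    induction n with
    | zero => simp
    | succ n ih =>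
      calc c (n+1) ≤ c n / 2 := hchalf n
        _ ≤ (c 0 / 2 ^ n) / 2 := by linarith
        _ = c 0 / 2 ^ (n+1) := by ring
  -- existence of some `n` with `c n ≤ δ`
  have hex : ∀ δ : ℝ, 0 < δ → ∃ n, c n ≤ δ := by
    intro δ hδ
    obtain ⟨n, hn⟩ := pow_unbounded_of_one_lt (c 0 / δ) (by norm_num : (1:ℝ) < 2)
    refine ⟨n, ?_⟩
    have h2n : (0:ℝ) < 2 ^ n := by positivity
    calc c n ≤ c 0 / 2 ^ n := hcbound n
      _ ≤ δ := by
        rw [div_le_iff₀ h2n]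
        have := (div_lt_iff₀ hδ).mp hn
        linarith
  -- the function ε
  set E : ℝ → ℝ := fun δ => if h : 0 < δ ∧ δ < c 0 then
      1 / ((Nat.find (hex δ h.1) : ℝ) + 1) else 1/2 with hE
  have hNfind : ∀ δ (h : 0 < δ ∧ δ < c 0), 1 ≤ Nat.find (hex δ h.1) := by
    intro δ h
    rcases Nat.eq_zero_or_pos (Nat.find (hex δ h.1)) with h0 | h1
    · exfalso
      have hsp := Nat.find_spec (hex δ h.1)
      rw [h0] at hsp
      exact absurd hsp (not_le.mpr h.2)
    · exact h1
  have hkey : ∀ δ (h : 0 < δ ∧ δ < c 0), ∃ n : ℕ,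
      Nat.find (hex δ h.1) = n + 1 ∧ E δ = 1 / ((n : ℝ) + 2) ∧ δ < A n := by
    intro δ h
    set N := Nat.find (hex δ h.1) with hN
    refine ⟨N - 1, (Nat.succ_pred_eq_of_pos (hNfind δ h)).symm, ?_, ?_⟩
    · have hEδ : E δ = 1 / ((N : ℝ) + 1) := dif_pos h
      rw [hEδ]
      have h1 : N - 1 + 1 = N := Nat.succ_pred_eq_of_pos (hNfind δ h)
      have : ((N : ℝ)) = ((N - 1 : ℕ) : ℝ) + 1 := by exact_mod_cast h1.symm
      rw [this]; ring_nf
    · have hlt : N - 1 < N := Nat.pred_lt (Nat.one_le_iff_ne_zero.mp (hNfind δ h))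
      have := Nat.find_min (hex δ h.1) hlt
      have hδc : δ < c (N - 1) := not_le.mp this
      exact lt_of_lt_of_le hδc (hcA _)
  have hmaster : ∀ m : ℕ, ∀ᶠ δ in nhdsWithin (0:ℝ) (Ioi 0), ∃ n : ℕ, m ≤ n ∧
      E δ = 1 / ((n : ℝ) + 2) ∧ 0 < δ ∧ δ < A n := by
    intro m
    have hmem : Ioo (0:ℝ) (min (c 0) (c m)) ∈ nhdsWithin (0:ℝ) (Ioi 0) :=
      Ioo_mem_nhdsGT_of_mem ⟨le_refl 0, lt_min (hcpos 0) (hcpos m)⟩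
    filter_upwards [hmem] with δ hδ
    have h : 0 < δ ∧ δ < c 0 := ⟨hδ.1, lt_of_lt_of_le hδ.2 (min_le_left _ _)⟩
    obtain ⟨n, hNeq, hEeq, hδA⟩ := hkey δ h
    refine ⟨n, ?_, hEeq, h.1, hδA⟩
    have hm : m < Nat.find (hex δ h.1) := by
      rw [Nat.lt_find_iff]
      intro i hi
      have : c m ≤ c i := hcanti i m hi
      have hδcm : δ < c m := lt_of_lt_of_le hδ.2 (min_le_right _ _)
      exact not_le.mpr (lt_of_lt_of_le hδcm this)
    rw [hNeq] at hm
    omega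
  -- numeric helpers
  have hxfacts : ∀ n : ℕ, (2:ℝ) ≤ (n:ℝ) + 2 := by
    intro n; have : (0:ℝ) ≤ (n:ℝ) := Nat.cast_nonneg n; linarith
  have hsmall : ∀ η : ℝ, 0 < η → ∃ m : ℕ, 1 / ((m:ℝ) + 2) < η := by
    intro η hη
    obtain ⟨m, hm⟩ := exists_nat_gt (1/η)
    refine ⟨m, ?_⟩
    rw [div_lt_iff₀ (by positivity)]
    have h1 : 1 < (m:ℝ) * η := by
      have := (div_lt_iff₀ hη).mp hm
      linarith
    have : (0:ℝ) ≤ (m:ℝ) := Nat.cast_nonneg m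
    nlinarith
  have hmono : ∀ m n : ℕ, m ≤ n → 1 / ((n:ℝ) + 2) ≤ 1 / ((m:ℝ) + 2) := by
    intro m n h
    have : ((m:ℝ)) ≤ (n:ℝ) := Nat.cast_le.mpr h
    apply one_div_le_one_div_of_le (by positivity)
    linarith
  refine ⟨E, ?_, ?_, ?_, ?_, ?_, ?_⟩
  · -- range
    intro δ hδ
    by_cases h : 0 < δ ∧ δ < c 0
    · obtain ⟨n, _, hEeq, _⟩ := hkey δ h
      rw [hEeq]
      have hx := hxfacts n
      constructor
      · positivity
      · rw [div_lt_one (by linarith)]; linarith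
    · have : E δ = 1/2 := dif_neg h
      rw [this]; norm_num
  · -- eventually δ < E δ
    filter_upwards [hmaster 0] with δ ⟨n, _, hEeq, hδ0, hδA⟩
    rw [hEeq]
    have hx := hxfacts n
    have h1 := hA1 n
    have hsq : 1 / ((n:ℝ) + 2) ^ 2 ≤ 1 / ((n:ℝ) + 2) := by
      apply one_div_le_one_div_of_le (by linarith)
      nlinarith
    linarith
  · -- E → 0
    rw [Metric.tendsto_nhds]
    intro η hη
    obtain ⟨m, hm⟩ := hsmall η hη
    filter_upwards [hmaster m] with δ ⟨n, hmn, hEeq, hδ0, hδA⟩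
    rw [hEeq, Real.dist_eq, sub_zero, abs_of_pos (by positivity)]
    exact lt_of_le_of_lt (hmono m n hmn) hm
  · -- δ / E → 0
    rw [Metric.tendsto_nhds]
    intro η hη
    obtain ⟨m, hm⟩ := hsmall η hη
    filter_upwards [hmaster m] with δ ⟨n, hmn, hEeq, hδ0, hδA⟩
    have hx := hxfacts n
    have hdiv : δ / (1 / ((n:ℝ) + 2)) = δ * ((n:ℝ) + 2) := by
      field_simp
    rw [hEeq, hdiv, Real.dist_eq, sub_zero, abs_of_pos (by positivity)]
    have h1 := hA1 n
    have hlt : δ * ((n:ℝ) + 2) < 1 / ((n:ℝ) + 2) := by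
      have : δ * ((n:ℝ) + 2) < (1 / ((n:ℝ) + 2) ^ 2) * ((n:ℝ) + 2) :=
        mul_lt_mul_of_pos_right (lt_trans hδA h1) (by linarith)
      calc δ * ((n:ℝ) + 2) < (1 / ((n:ℝ) + 2) ^ 2) * ((n:ℝ) + 2) := this
        _ = 1 / ((n:ℝ) + 2) := by field_simp
    exact lt_of_lt_of_le hlt (le_trans (hmono m n hmn) (le_of_lt hm))
  · -- rpow → 1
    have hlog : Tendsto (fun δ => Real.log (E δ) * ρ (δ / E δ))
        (nhdsWithin 0 (Ioi 0)) (nhds 0) := by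
      rw [Metric.tendsto_nhds]
      intro η hη
      obtain ⟨m, hm⟩ := hsmall η hη
      filter_upwards [hmaster m] with δ ⟨n, hmn, hEeq, hδ0, hδA⟩
      have hx := hxfacts n
      have hρb := (hA2 n δ hδ0 hδA).2
      have hdiv : δ / (1 / ((n:ℝ) + 2)) = δ * ((n:ℝ) + 2) := by
        field_simp
      rw [hEeq, hdiv, Real.dist_eq, sub_zero]
      rw [abs_mul]
      have hlogx : |Real.log (1 / ((n:ℝ) + 2))| = Real.log ((n:ℝ) + 2) := by
        rw [one_div, Real.log_inv, abs_neg, abs_of_nonneg]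
        exact Real.log_nonneg (by linarith)
      rw [hlogx]
      have hlogpos : 0 ≤ Real.log ((n:ℝ) + 2) := Real.log_nonneg (by linarith)
      have hloglt : Real.log ((n:ℝ) + 2) ≤ (n:ℝ) + 2 := by
        have := Real.log_le_sub_one_of_pos (show (0:ℝ) < (n:ℝ) + 2 by linarith)
        linarith
      calc Real.log ((n:ℝ) + 2) * |ρ (δ * ((n:ℝ) + 2))|
          ≤ ((n:ℝ) + 2) * |ρ (δ * ((n:ℝ) + 2))| :=
            mul_le_mul_of_nonneg_right hloglt (abs_nonneg _)
        _ < ((n:ℝ) + 2) * (1 / ((n:ℝ) + 2) ^ 2) :=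
            mul_lt_mul_of_pos_left hρb (by linarith)
        _ = 1 / ((n:ℝ) + 2) := by field_simp
        _ ≤ 1 / ((m:ℝ) + 2) := hmono m n hmn
        _ < η := hm
    have hexp : Tendsto (fun δ => Real.exp (Real.log (E δ) * ρ (δ / E δ)))
        (nhdsWithin 0 (Ioi 0)) (nhds 1) := by
      have := (Real.continuous_exp.tendsto 0).comp hlog
      simpa [Function.comp_def] using this
    refine hexp.congr' ?_
    filter_upwards [hmaster 0] with δ ⟨n, _, hEeq, hδ0, hδA⟩
    have hx := hxfacts n
    have hEpos : 0 < E δ := by rw [hEeq]; positivity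
    rw [Real.rpow_def_of_pos hEpos]
  · -- Δ → 0
    rw [Metric.tendsto_nhds]
    intro η hη
    obtain ⟨m, hm⟩ := hsmall η hη
    filter_upwards [hmaster m] with δ ⟨n, hmn, hEeq, hδ0, hδA⟩
    have hΔb := (hA2 n δ hδ0 hδA).1
    rw [Real.dist_eq, sub_zero, hEeq]
    exact lt_of_lt_of_le (lt_of_lt_of_le hΔb (hmono m n hmn)) (le_of_lt hm)
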